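/- Let p ≥ 2 be an integer, let f_ref, f_0, f_k, f_{k+1} be real numbers with f_{k+1} ≤ f_0 and f_ref ≤ f_{k+1}, let G ≥ 0 be a real number (representing ‖g(x_{k+1})‖), and let κ > 0, ζ > 0. Suppose that G² ≥ κ(f_{k+1} − f_ref) ≥ 0 (i.e., x_{k+1} lies in subregion R_1^2), that f_k − f_{k+1} ≥ G^{(p+1)/p}/ζ, and that f_k − f_ref ≥ (κ^{p+1}/ζ^{2p})^{1/(p−1)}. Then the objective gap decreases at a linear rate: f_{k+1} − f_ref ≤ ((f_0 − f_ref)^{(p−1)/(2p)} / (κ^{(p+1)/(2p)}/ζ + (f_0 − f_ref)^{(p−1)/(2p)})) · (f_k − f_ref). -/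

import Mathlib

/-- Theorem 6.1(a), first case: linear decrease of the objective gap when
`x_{k+1} ∈ R_1^2` and `f_k − f_ref ≥ (κ^{p+1}/ζ^{2p})^{1/(p−1)}`. -/
theorem rc_regionp_sub2_linear
    (p : ℕ) (hp : 2 ≤ p)
    (f_ref f_0 f_k f_k1 G κ ζ : ℝ)
    (hmono : f_k1 ≤ f_0) (href : f_ref ≤ f_k1)
    (hG : 0 ≤ G) (hκ : 0 < κ) (hζ : 0 < ζ)
    (h1 : G ^ 2 ≥ κ * (f_k1 - f_ref)) (h2 : κ * (f_k1 - f_ref) ≥ 0)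
    (hdec : f_k - f_k1 ≥ G ^ (((p : ℝ) + 1) / p) / ζ)
    (hlarge : f_k - f_ref ≥ (κ ^ (p + 1) / ζ ^ (2 * p)) ^ ((1 : ℝ) / ((p : ℝ) - 1))) :
    f_k1 - f_ref ≤
      ((f_0 - f_ref) ^ (((p : ℝ) - 1) / (2 * p)) /
        (κ ^ (((p : ℝ) + 1) / (2 * p)) / ζ + (f_0 - f_ref) ^ (((p : ℝ) - 1) / (2 * p)))) *
        (f_k - f_ref) := by
  have hpR : (0:ℝ) < (p:ℝ) := by positivity
  have hp1 : (1:ℝ) ≤ (p:ℝ) := by exact_mod_cast Nat.one_le_of_lt hp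
  set Δ1 := f_k1 - f_ref with hΔ1def
  set Δ0 := f_0 - f_ref with hΔ0def
  set Δk := f_k - f_ref with hΔkdef
  have hΔ1 : 0 ≤ Δ1 := by simp [hΔ1def]; linarith
  have hΔ10 : Δ1 ≤ Δ0 := by simp [hΔ1def, hΔ0def]; linarith
  have hΔ0 : 0 ≤ Δ0 := le_trans hΔ1 hΔ10
  set e : ℝ := ((p:ℝ) + 1) / (2 * p) with he
  set θ : ℝ := ((p:ℝ) - 1) / (2 * p) with hθ
  have hθ0 : 0 ≤ θ := by
    apply div_nonneg <;> linarith
  have he0 : 0 ≤ e := by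
    apply div_nonneg <;> linarith
  have hsum : θ + e = 1 := by
    rw [hθ, he, ← add_div, div_eq_one_iff_eq (by positivity)]
    ring
  -- G ≥ (κ Δ1)^{1/2}
  have hG1 : (κ * Δ1) ^ ((1:ℝ)/2) ≤ G := by
    have := Real.rpow_le_rpow h2 h1 (by norm_num : (0:ℝ) ≤ 1/2)
    calc (κ * Δ1) ^ ((1:ℝ)/2) ≤ (G ^ 2) ^ ((1:ℝ)/2) := this
      _ = G := by
        rw [← Real.rpow_natCast G 2, ← Real.rpow_mul hG]
        norm_num
  -- G^{(p+1)/p} ≥ (κΔ1)^e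
  have hG2 : (κ * Δ1) ^ e ≤ G ^ (((p:ℝ) + 1) / p) := by
    have hexp : (0:ℝ) ≤ ((p:ℝ) + 1) / p := by positivity
    have h := Real.rpow_le_rpow (Real.rpow_nonneg (by nlinarith) _) hG1 hexp
    rw [← Real.rpow_mul (by nlinarith)] at h
    have : (1:ℝ)/2 * (((p:ℝ) + 1) / p) = e := by
      rw [he]; field_simp
    rwa [this] at h
  -- split (κΔ1)^e = κ^e Δ1^e
  have hmul : (κ * Δ1) ^ e = κ ^ e * Δ1 ^ e :=
    Real.mul_rpow (le_of_lt hκ) hΔ1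
  -- Δk ≥ Δ1 + (κ^e/ζ) Δ1^e
  have hkey : Δ1 + κ ^ e / ζ * Δ1 ^ e ≤ Δk := by
    have h3 : κ ^ e * Δ1 ^ e / ζ ≤ f_k - f_k1 := by
      refine le_trans ?_ hdec
      rw [← hmul]
      gcongr
    have : Δk = Δ1 + (f_k - f_k1) := by simp [hΔkdef, hΔ1def]
    rw [this]
    have : κ ^ e / ζ * Δ1 ^ e = κ ^ e * Δ1 ^ e / ζ := by ring
    linarith [this ▸ h3]
  -- Δ1 ≤ Δ0^θ Δ1^e
  have hkey2 : Δ1 ≤ Δ0 ^ θ * Δ1 ^ e := by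
    calc Δ1 = Δ1 ^ θ * Δ1 ^ e := by
          rw [← Real.rpow_add' hΔ1 (by rw [hsum]; norm_num), hsum, Real.rpow_one]
      _ ≤ Δ0 ^ θ * Δ1 ^ e := by gcongr
  have hα : 0 < κ ^ e / ζ := by positivity
  have hD : 0 < κ ^ e / ζ + Δ0 ^ θ := by positivity
  rw [div_mul_eq_mul_div, le_div_iff₀ hD]
  have hΔ1e : 0 ≤ Δ1 ^ e := Real.rpow_nonneg hΔ1 _
  have hΔ0θ : 0 ≤ Δ0 ^ θ := Real.rpow_nonneg hΔ0 _
  nlinarith [mul_le_mul_of_nonneg_left hkey hΔ0θ, mul_le_mul_of_nonneg_left hkey2 (le_of_lt hα)]
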